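/- For the hypergeometric coefficients p(s) = (γ − (1+α+β)s)/(s(1−s)) and q(s) = −αβ/(s(1−s)), the constraint q(q'' + 2p'q + 5q'p + 6p²q) + c₁(q' + 2pq)² − c₂ q³ = 0 holds identically in s (on s ∈ (0,1), αβ ≠ 0) if and only if the three algebraic relations hold: (4c₁+6)γ² − (4c₁+7)γ + c₁ + 2 = 0, (4c₁+6)(α+β)² − c₂ αβ = 0, and c₂ αβ − (8c₁+12)(α+β)γ + (4c₁+5)(α+β) + 2γ − 1 = 0. -/

import Mathlib

/-- Coefficient `p` of the hypergeometric equation in normalized form. -/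
noncomputable def hypergeomP (α β γ : ℝ) : ℝ → ℝ :=
  fun s => (γ - (1 + α + β) * s) / (s * (1 - s))

/-- Coefficient `q` of the hypergeometric equation in normalized form. -/
noncomputable def hypergeomQ (α β : ℝ) : ℝ → ℝ :=
  fun s => -(α * β) / (s * (1 - s))

lemma hg_mem_ne (s : ℝ) (hs : s ∈ Set.Ioo (0 : ℝ) 1) : s * (1 - s) ≠ 0 :=
  ne_of_gt (mul_pos hs.1 (by linarith [hs.2]))

lemma hg_hasDerivU (s : ℝ) : HasDerivAt (fun x : ℝ => x * (1 - x)) (1 - 2 * s) s := by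
  have h := (hasDerivAt_id s).mul ((hasDerivAt_const s 1).sub (hasDerivAt_id s))
  refine h.congr_deriv ?_
  simp; ring

lemma hg_derivQ (α β s : ℝ) (hs : s ∈ Set.Ioo (0 : ℝ) 1) :
    deriv (hypergeomQ α β) s = α * β * (1 - 2 * s) / (s * (1 - s)) ^ 2 := by
  have h := (hasDerivAt_const s (-(α * β))).div (hg_hasDerivU s) (hg_mem_ne s hs)
  rw [show hypergeomQ α β = ((fun _ : ℝ => -(α * β)) / fun x : ℝ => x * (1 - x)) from rfl, h.deriv]
  ring

lemma hg_derivQ2 (α β s : ℝ) (hs : s ∈ Set.Ioo (0 : ℝ) 1) :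
    deriv (deriv (hypergeomQ α β)) s
      = α * β * (-2 * (s * (1 - s)) - 2 * (1 - 2 * s) ^ 2) / (s * (1 - s)) ^ 3 := by
  have heq : deriv (hypergeomQ α β) =ᶠ[nhds s]
      fun x : ℝ => α * β * (1 - 2 * x) / (x * (1 - x)) ^ 2 := by
    filter_upwards [isOpen_Ioo.mem_nhds hs] with x hx
    exact hg_derivQ α β x hx
  rw [heq.deriv_eq]
  have hN : HasDerivAt (fun x : ℝ => α * β * (1 - 2 * x)) (α * β * (-2)) s := by
    have h := HasDerivAt.const_mul (α * β)
      ((hasDerivAt_const s 1).sub (HasDerivAt.const_mul 2 (hasDerivAt_id s)))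
    refine h.congr_deriv ?_
    ring
  have hD := (hg_hasDerivU s).pow 2
  have hD' : (s * (1 - s)) ^ 2 ≠ 0 := pow_ne_zero _ (hg_mem_ne s hs)
  rw [(show HasDerivAt (fun x : ℝ => α * β * (1 - 2 * x) / (x * (1 - x)) ^ 2) _ s
    from hN.div hD hD').deriv]
  have hu := hg_mem_ne s hs
  have hs0 : s ≠ 0 := hs.1.ne'
  have hs1 : 1 - s ≠ 0 := by linarith [hs.2]
  field_simp
  ring

lemma hg_derivP (α β γ s : ℝ) (hs : s ∈ Set.Ioo (0 : ℝ) 1) :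
    deriv (hypergeomP α β γ) s
      = (-(1 + α + β) * (s * (1 - s)) - (γ - (1 + α + β) * s) * (1 - 2 * s))
        / (s * (1 - s)) ^ 2 := by
  have hN : HasDerivAt (fun x : ℝ => γ - (1 + α + β) * x) (-(1 + α + β)) s := by
    have h := (hasDerivAt_const s γ).sub (HasDerivAt.const_mul (1 + α + β) (hasDerivAt_id s))
    refine h.congr_deriv ?_
    ring
  rw [show hypergeomP α β γ = ((fun x : ℝ => γ - (1 + α + β) * x) / fun x : ℝ => x * (1 - x)) from rfl,
    (hN.div (hg_hasDerivU s) (hg_mem_ne s hs)).deriv]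

lemma hg_key (α β γ c₁ c₂ s : ℝ) (hs : s ∈ Set.Ioo (0 : ℝ) 1) :
    hypergeomQ α β s *
            (deriv (deriv (hypergeomQ α β)) s
              + 2 * deriv (hypergeomP α β γ) s * hypergeomQ α β s
              + 5 * deriv (hypergeomQ α β) s * hypergeomP α β γ s
              + 6 * (hypergeomP α β γ s) ^ 2 * hypergeomQ α β s)
          + c₁ * (deriv (hypergeomQ α β) s
              + 2 * hypergeomP α β γ s * hypergeomQ α β s) ^ 2
          - c₂ * (hypergeomQ α β s) ^ 3
      = (α * β) ^ 2 *
          (((4 * c₁ + 6) * γ ^ 2 - (4 * c₁ + 7) * γ + c₁ + 2)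
            + (c₂ * (α * β) - (8 * c₁ + 12) * (α + β) * γ
                + (4 * c₁ + 5) * (α + β) + 2 * γ - 1) * s
            + ((4 * c₁ + 6) * (α + β) ^ 2 - c₂ * (α * β)) * s ^ 2)
          / (s * (1 - s)) ^ 4 := by
  rw [hg_derivQ α β s hs, hg_derivQ2 α β s hs, hg_derivP α β γ s hs]
  simp only [hypergeomP, hypergeomQ]
  have hu := hg_mem_ne s hs
  field_simp
  ring

/-- for the hypergeometric coefficients, the linearising constraint
holds identically on `(0,1)` iff the three algebraic relations among
`α, β, γ, c₁, c₂` hold. -/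
theorem hypergeometric_constraint_iff
    (α β γ c₁ c₂ : ℝ) (hαβ : α * β ≠ 0) :
    (∀ s ∈ Set.Ioo (0 : ℝ) 1,
        hypergeomQ α β s *
            (deriv (deriv (hypergeomQ α β)) s
              + 2 * deriv (hypergeomP α β γ) s * hypergeomQ α β s
              + 5 * deriv (hypergeomQ α β) s * hypergeomP α β γ s
              + 6 * (hypergeomP α β γ s) ^ 2 * hypergeomQ α β s)
          + c₁ * (deriv (hypergeomQ α β) s
              + 2 * hypergeomP α β γ s * hypergeomQ α β s) ^ 2
          - c₂ * (hypergeomQ α β s) ^ 3 = 0)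
      ↔ ((4 * c₁ + 6) * γ ^ 2 - (4 * c₁ + 7) * γ + c₁ + 2 = 0 ∧
          (4 * c₁ + 6) * (α + β) ^ 2 - c₂ * (α * β) = 0 ∧
          c₂ * (α * β) - (8 * c₁ + 12) * (α + β) * γ
            + (4 * c₁ + 5) * (α + β) + 2 * γ - 1 = 0) := by
  constructor
  · intro h
    have key0 : ∀ s ∈ Set.Ioo (0 : ℝ) 1,
        ((4 * c₁ + 6) * γ ^ 2 - (4 * c₁ + 7) * γ + c₁ + 2)
            + (c₂ * (α * β) - (8 * c₁ + 12) * (α + β) * γ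
                + (4 * c₁ + 5) * (α + β) + 2 * γ - 1) * s
            + ((4 * c₁ + 6) * (α + β) ^ 2 - c₂ * (α * β)) * s ^ 2 = 0 := by
      intro s hs
      have h1 := h s hs
      rw [hg_key α β γ c₁ c₂ s hs] at h1
      have hu4 : (s * (1 - s)) ^ 4 ≠ 0 := pow_ne_zero _ (hg_mem_ne s hs)
      have hab : (α * β) ^ 2 ≠ 0 := pow_ne_zero _ hαβ
      rw [div_eq_zero_iff] at h1
      rcases h1 with h1 | h1
      · rcases mul_eq_zero.mp h1 with h' | h'
        · exact absurd h' hab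
        · exact h'
      · exact absurd h1 hu4
    have e1 := key0 (1 / 2) (by norm_num)
    have e2 := key0 (1 / 4) (by norm_num)
    have e3 := key0 (3 / 4) (by norm_num)
    norm_num at e1 e2 e3
    refine ⟨by linarith, by linarith, by linarith⟩
  · rintro ⟨h1, h2, h3⟩ s hs
    rw [hg_key α β γ c₁ c₂ s hs]
    have hz : ((4 * c₁ + 6) * γ ^ 2 - (4 * c₁ + 7) * γ + c₁ + 2)
            + (c₂ * (α * β) - (8 * c₁ + 12) * (α + β) * γ
                + (4 * c₁ + 5) * (α + β) + 2 * γ - 1) * s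
            + ((4 * c₁ + 6) * (α + β) ^ 2 - c₂ * (α * β)) * s ^ 2 = 0 := by
      linear_combination h1 + s * h3 + s ^ 2 * h2
    rw [hz]
    simp
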